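/- Let p be a prime and let A be a commutative ring in which p = 0. Suppose there exist elements a₁,…,a_N ∈ A such that the smallest subring of A containing all p-th powers {a^p : a ∈ A} together with a₁,…,a_N is A itself. Then for every integer q > N, the q-th exterior power over A of the module of Kähler differentials Ω_{A/𝔽_p} is the zero module. -/
import Mathlib

open scoped TensorProduct

/-- An alternating map in `n` variables vanishes if the module is spanned by fewer than `n`
elements. -/
lemma alternatingMap_eq_zero_of_span_lt
    {R M N : Type*} [CommRing R] [AddCommGroup M] [Module R M]
    [AddCommGroup N] [Module R N] {n k : ℕ}
    (f : M [⋀^Fin n]→ₗ[R] N) (g : Fin k → M)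
    (hg : Submodule.span R (Set.range g) = ⊤) (h : k < n) (v : Fin n → M) :
    f v = 0 := by
  have hv : ∀ i, ∃ c : Fin k → R, ∑ j, c j • g j = v i := fun i => by
    have : v i ∈ Submodule.span R (Set.range g) := hg ▸ Submodule.mem_top
    exact (Finsupp.mem_span_range_iff_exists_finsupp.mp this).elim
      fun c hc => ⟨c, by simpa [Finsupp.sum_fintype] using hc⟩
  choose c hc using hv
  have : v = fun i => ∑ j, c i j • g j := by
    funext i; exact (hc i).symm
  rw [this]
  have := (f : MultilinearMap R (fun _ : Fin n => M) N).map_sum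
    (g := fun i j => c i j • g j)
  rw [show f (fun i => ∑ j, c i j • g j)
      = (f : MultilinearMap R (fun _ : Fin n => M) N) (fun i => ∑ j, c i j • g j) from rfl, this]
  refine Finset.sum_eq_zero fun r _ => ?_
  have hmap := (f : MultilinearMap R (fun _ : Fin n => M) N).map_smul_univ
    (fun i => c i (r i)) (fun i => g (r i))
  rw [hmap, show ((f : MultilinearMap R (fun _ : Fin n => M) N) fun i => g (r i))
      = f fun i => g (r i) from rfl]
  have hninj : ¬ Function.Injective fun i : Fin n => g (r i) := by
    intro hinj
    have : ¬ Function.Injective r := fun hr =>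
      absurd (Fintype.card_le_of_injective r hr) (by simpa using h)
    simp only [Function.Injective] at this
    push_neg at this
    obtain ⟨i, j, hij, hne⟩ := this
    exact hne (hinj (by simp [hij]))
  rw [f.map_eq_zero_of_not_injective _ hninj, smul_zero]

/-- Lemma (derhamwittzero), de Rham part: if `A` is a commutative ring of characteristic `p`
which is generated as an algebra over the subring of `p`-th powers by `N` elements, then the
`q`-th exterior power of the module of Kähler differentials of `A` vanishes for `q > N`. -/
theorem exteriorPower_kaehlerDifferential_subsingleton
    (p : ℕ) (hp : p.Prime) (A : Type*) [CommRing A] [CharP A p]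
    (N : ℕ) (a : Fin N → A)
    (hgen : Subring.closure ((Set.range fun x : A => x ^ p) ∪ Set.range a) = ⊤)
    (q : ℕ) (hq : q > N) :
    Subsingleton (⋀[A]^q (Ω[A⁄ℤ])) := by
  classical
  set D := KaehlerDifferential.D ℤ A
  -- Step 1: Ω[A⁄ℤ] is spanned by the differentials of the `a i`.
  have hspan : Submodule.span A (Set.range fun i => D (a i)) = ⊤ := by
    rw [← KaehlerDifferential.span_range_derivation]
    refine le_antisymm (Submodule.span_mono ?_) (Submodule.span_le.mpr ?_)
    · rintro _ ⟨i, rfl⟩; exact ⟨a i, rfl⟩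
    rintro _ ⟨x, rfl⟩
    have hx : x ∈ Subring.closure ((Set.range fun x : A => x ^ p) ∪ Set.range a) :=
      hgen ▸ Subring.mem_top x
    induction hx using Subring.closure_induction with
    | mem y hy =>
      rcases hy with hy | hy
      · obtain ⟨z, rfl⟩ := hy
        have : D (z ^ p) = 0 := by
          rw [Derivation.leibniz_pow, ← Nat.cast_smul_eq_nsmul A, CharP.cast_eq_zero,
            zero_smul]
        rw [this]; exact Submodule.zero_mem _
      · obtain ⟨i, rfl⟩ := hy
        exact Submodule.subset_span ⟨i, rfl⟩
    | one => rw [Derivation.map_one_eq_zero]; exact Submodule.zero_mem _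
    | zero => rw [map_zero]; exact Submodule.zero_mem _
    | add x y _ _ hx hy => rw [map_add]; exact Submodule.add_mem _ hx hy
    | neg x _ hx => rw [map_neg]; exact Submodule.neg_mem _ hx
    | mul x y _ _ hx hy =>
      rw [Derivation.leibniz]
      exact Submodule.add_mem _ (Submodule.smul_mem _ _ hy) (Submodule.smul_mem _ _ hx)
  -- Step 2: the exterior power vanishes.
  have hbot : (⋀[A]^q (Ω[A⁄ℤ])) = ⊥ := by
    rw [← ExteriorAlgebra.ιMulti_span_fixedDegree]
    refine le_antisymm (Submodule.span_le.mpr ?_) bot_le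
    rintro _ ⟨v, rfl⟩
    rw [SetLike.mem_coe, Submodule.mem_bot]
    exact alternatingMap_eq_zero_of_span_lt (ExteriorAlgebra.ιMulti A q)
      (fun i => D (a i)) hspan hq v
  rw [hbot]
  infer_instance
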